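/- For any non-negative integer t and any graph G, every t-perturbation of G is locally equivalent to a rank-2t perturbation of G. -/

import Mathlib

namespace EP

variable {V W : Type}

/-- Local complementation of `G` at `v`: complement the adjacency between
every pair of distinct neighbours of `v`. -/
def localComp (G : SimpleGraph V) (v : V) : SimpleGraph V where
  Adj x y := x ≠ y ∧
    ((G.Adj v x ∧ G.Adj v y ∧ ¬ G.Adj x y) ∨ (¬(G.Adj v x ∧ G.Adj v y) ∧ G.Adj x y))
  symm := ⟨by
    intro x y h
    obtain ⟨hxy, h⟩ := h
    refine ⟨hxy.symm, ?_⟩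
    rcases h with ⟨h1, h2, h3⟩ | ⟨h1, h2⟩
    · exact Or.inl ⟨h2, h1, fun h => h3 h.symm⟩
    · exact Or.inr ⟨fun h => h1 ⟨h.2, h.1⟩, h2.symm⟩⟩
  loopless := ⟨fun x h => h.1 rfl⟩

/-- Two graphs on the same vertex set are locally equivalent if one is obtained from
the other by a sequence of local complementations. -/
def LocEquiv (G G' : SimpleGraph V) : Prop :=
  Relation.ReflTransGen (fun A B => ∃ v, B = localComp A v) G G'

/-- `H` is a vertex-minor of `G`, located at the embedding `f`: some graph locally
equivalent to `G` induces a copy of `H` on the image of `f` (equivalently, `H` is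
obtained from `G` by a sequence of local complementations and vertex deletions,
with `f` recording the surviving vertices). -/
def IsVertexMinorAt (G : SimpleGraph V) (H : SimpleGraph W) (f : W ↪ V) : Prop :=
  ∃ G' : SimpleGraph V, LocEquiv G G' ∧ ∀ x y, H.Adj x y ↔ G'.Adj (f x) (f y)

/-- `G` has a vertex-minor isomorphic to `H`. -/
def HasVertexMinor (G : SimpleGraph V) (H : SimpleGraph W) : Prop :=
  ∃ f : W ↪ V, IsVertexMinorAt G H f

/-- `G₁` is a `t`-perturbation of `G₂`: they have the same vertex set `V`, and some
graph on `|V| + t` vertices contains both of them as vertex-minors (on `V`). -/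
def IsPerturbation (t : ℕ) (G₁ G₂ : SimpleGraph V) : Prop :=
  ∃ Gbig : SimpleGraph (V ⊕ Fin t),
    IsVertexMinorAt Gbig G₁ ⟨Sum.inl, Sum.inl_injective⟩ ∧
    IsVertexMinorAt Gbig G₂ ⟨Sum.inl, Sum.inl_injective⟩

/-- The disjoint union of `k` copies of `H`. -/
def copies (k : ℕ) (H : SimpleGraph W) : SimpleGraph (Fin k × W) where
  Adj x y := x.1 = y.1 ∧ H.Adj x.2 y.2
  symm := ⟨fun _ _ h => ⟨h.1.symm, h.2.symm⟩⟩
  loopless := ⟨fun x h => H.loopless.1 x.2 h.2⟩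

/-- `G` is a circle graph: its vertices can be assigned chords of a circle
(encoded by pairs of distinct endpoints, all `2|V|` endpoints being distinct) so that
two distinct vertices are adjacent iff their chords cross, i.e. exactly one endpoint
of one chord lies strictly between the two endpoints of the other. -/
def IsCircleGraph (G : SimpleGraph V) : Prop :=
  ∃ a b : V → ℝ,
    (∀ u v, a u = a v → u = v) ∧ (∀ u v, b u = b v → u = v) ∧ (∀ u v, a u ≠ b v) ∧
    ∀ u v, G.Adj u v ↔ u ≠ v ∧
      ¬((min (a u) (b u) < a v ∧ a v < max (a u) (b u)) ↔
        (min (a u) (b u) < b v ∧ b v < max (a u) (b u)))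

/-- `G` is `t`-robust for `H` if every `t`-perturbation of `G` has a vertex-minor
isomorphic to `H`. -/
def Robust (t : ℕ) (G : SimpleGraph V) (H : SimpleGraph W) : Prop :=
  ∀ G' : SimpleGraph V, IsPerturbation t G' G → HasVertexMinor G' H

open Classical in
/-- The cut-rank of `X` in `G`: the rank over `GF(2)` of the `X × Xᶜ` submatrix of the
adjacency matrix of `G`. -/
noncomputable def cutRank [Fintype V] (G : SimpleGraph V) (X : Set V) : ℕ :=
  (Matrix.of fun (x : X) (y : ↥Xᶜ) => if G.Adj x.1 y.1 then (1 : ZMod 2) else 0).rank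

/-- The graph obtained from `G` by deleting all edges with exactly one end in `X`. -/
def cutDelete (G : SimpleGraph V) (X : Set V) : SimpleGraph V where
  Adj x y := G.Adj x y ∧ (x ∈ X ↔ y ∈ X)
  symm := ⟨fun _ _ h => ⟨h.1.symm, h.2.symm⟩⟩
  loopless := ⟨fun x h => G.loopless.1 x h.1⟩

open Classical in
/-- The adjacency matrix of `G` over `GF(2)`. -/
noncomputable def adjMat (G : SimpleGraph V) : Matrix V V (ZMod 2) :=
  Matrix.of fun x y => if G.Adj x y then 1 else 0

/-- `G₁` is a rank-`t` perturbation of `G₂`: the adjacency matrix of `G₁` is obtained from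
that of `G₂` by adding a matrix of rank at most `t` over `GF(2)` and then zeroing out the
diagonal. -/
def IsRankPerturbation [Fintype V] (t : ℕ) (G₁ G₂ : SimpleGraph V) : Prop :=
  ∃ M : Matrix V V (ZMod 2), M.rank ≤ t ∧
    ∀ x y : V, x ≠ y → adjMat G₁ x y = adjMat G₂ x y + M x y

set_option maxHeartbeats 4000000
set_option linter.unusedVariables false

lemma localComp_adj (G : SimpleGraph V) (v x y : V) :
    (localComp G v).Adj x y ↔ x ≠ y ∧
    ((G.Adj v x ∧ G.Adj v y ∧ ¬ G.Adj x y) ∨ (¬(G.Adj v x ∧ G.Adj v y) ∧ G.Adj x y)) := Iff.rfl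
lemma lc_invol (G : SimpleGraph V) (u : V)  :
    (localComp (localComp G u) u) = G := by
  ext a b
  by_cases e0 : a = b
  · subst e0; simp only [SimpleGraph.irrefl]
  have e0' : b ≠ a := fun hh => e0 hh.symm
  by_cases ea0 : a = u
  · have eas : u = a := ea0.symm
    subst eas
    by_cases g0 : G.Adj u b <;> simp only [localComp_adj, e0, e0', g0, SimpleGraph.irrefl, ne_eq, not_true, not_false_iff, true_and, and_true, false_and, and_false, true_or, or_true, not_not, or_false, false_or]
  have ea0' : u ≠ a := fun hh => ea0 hh.symm
  by_cases eb0 : b = u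
  · have ebs : u = b := eb0.symm
    subst ebs
    by_cases g0 : G.Adj u a <;> simp only [localComp_adj, e0, e0', ea0, ea0', g0, SimpleGraph.irrefl, ne_eq, not_true, not_false_iff, true_and, and_true, false_and, and_false, true_or, or_true, not_not, or_false, false_or]
  have eb0' : u ≠ b := fun hh => eb0 hh.symm
  by_cases g0 : G.Adj u a <;> by_cases g1 : G.Adj u b <;> by_cases g2 : G.Adj a b <;> simp only [localComp_adj, e0, e0', ea0, ea0', eb0, eb0', g0, g1, g2, SimpleGraph.irrefl, ne_eq, not_true, not_false_iff, true_and, and_true, false_and, and_false, true_or, or_true, not_not, or_false, false_or]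

lemma lc_comm (G : SimpleGraph V) (u v : V) (hneuv : u ≠ v) (hpuv : ¬ G.Adj u v) :
    (localComp (localComp G v) u) = (localComp (localComp G u) v) := by
  have hneuv' : v ≠ u := fun hh => hneuv hh.symm
  have hpuv' : ¬ G.Adj v u := fun hh => hpuv hh.symm
  ext a b
  by_cases e0 : a = b
  · subst e0; simp only [SimpleGraph.irrefl]
  have e0' : b ≠ a := fun hh => e0 hh.symm
  by_cases ea0 : a = u
  · have eas : u = a := ea0.symm
    subst eas
    by_cases eb0 : b = v
    · have ebs : v = b := eb0.symm
      subst ebs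
      simp only [localComp_adj, hneuv, hneuv', hpuv, hpuv', e0, e0', SimpleGraph.irrefl, ne_eq, not_true, not_false_iff, true_and, and_true, false_and, and_false, true_or, or_true, not_not, or_false, false_or]
    have eb0' : v ≠ b := fun hh => eb0 hh.symm
    by_cases g0 : G.Adj u b <;> by_cases g1 : G.Adj v b <;> simp only [localComp_adj, hneuv, hneuv', hpuv, hpuv', e0, e0', eb0, eb0', g0, g1, SimpleGraph.irrefl, ne_eq, not_true, not_false_iff, true_and, and_true, false_and, and_false, true_or, or_true, not_not, or_false, false_or]
  by_cases ea1 : a = v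
  · have eas : v = a := ea1.symm
    subst eas
    by_cases eb0 : b = u
    · have ebs : u = b := eb0.symm
      subst ebs
      simp only [localComp_adj, hneuv, hneuv', hpuv, hpuv', e0, e0', SimpleGraph.irrefl, ne_eq, not_true, not_false_iff, true_and, and_true, false_and, and_false, true_or, or_true, not_not, or_false, false_or]
    have eb0' : u ≠ b := fun hh => eb0 hh.symm
    by_cases g0 : G.Adj u b <;> by_cases g1 : G.Adj v b <;> simp only [localComp_adj, hneuv, hneuv', hpuv, hpuv', e0, e0', eb0, eb0', g0, g1, SimpleGraph.irrefl, ne_eq, not_true, not_false_iff, true_and, and_true, false_and, and_false, true_or, or_true, not_not, or_false, false_or]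
  have ea0' : u ≠ a := fun hh => ea0 hh.symm
  have ea1' : v ≠ a := fun hh => ea1 hh.symm
  by_cases eb0 : b = u
  · have ebs : u = b := eb0.symm
    subst ebs
    by_cases g0 : G.Adj u a <;> by_cases g1 : G.Adj v a <;> simp only [localComp_adj, hneuv, hneuv', hpuv, hpuv', e0, e0', ea0, ea0', ea1, ea1', g0, g1, SimpleGraph.irrefl, ne_eq, not_true, not_false_iff, true_and, and_true, false_and, and_false, true_or, or_true, not_not, or_false, false_or]
  by_cases eb1 : b = v
  · have ebs : v = b := eb1.symm
    subst ebs
    by_cases g0 : G.Adj u a <;> by_cases g1 : G.Adj v a <;> simp only [localComp_adj, hneuv, hneuv', hpuv, hpuv', e0, e0', ea0, ea0', ea1, ea1', g0, g1, SimpleGraph.irrefl, ne_eq, not_true, not_false_iff, true_and, and_true, false_and, and_false, true_or, or_true, not_not, or_false, false_or]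
  have eb0' : u ≠ b := fun hh => eb0 hh.symm
  have eb1' : v ≠ b := fun hh => eb1 hh.symm
  by_cases g0 : G.Adj u a <;> by_cases g1 : G.Adj u b <;> by_cases g2 : G.Adj v a <;> by_cases g3 : G.Adj v b <;> by_cases g4 : G.Adj a b <;> simp only [localComp_adj, hneuv, hneuv', hpuv, hpuv', e0, e0', ea0, ea0', ea1, ea1', eb0, eb0', eb1, eb1', g0, g1, g2, g3, g4, SimpleGraph.irrefl, ne_eq, not_true, not_false_iff, true_and, and_true, false_and, and_false, true_or, or_true, not_not, or_false, false_or]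

lemma lc_piv3 (G : SimpleGraph V) (u v : V) (hneuv : u ≠ v) (hpuv : G.Adj u v) :
    (localComp (localComp (localComp G u) v) u) = (localComp (localComp (localComp G v) u) v) := by
  have hneuv' : v ≠ u := fun hh => hneuv hh.symm
  have hpuv' : G.Adj v u := hpuv.symm
  ext a b
  by_cases e0 : a = b
  · subst e0; simp only [SimpleGraph.irrefl]
  have e0' : b ≠ a := fun hh => e0 hh.symm
  by_cases ea0 : a = u
  · have eas : u = a := ea0.symm
    subst eas
    by_cases eb0 : b = v
    · have ebs : v = b := eb0.symm
      subst ebs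
      simp only [localComp_adj, hneuv, hneuv', hpuv, hpuv', e0, e0', SimpleGraph.irrefl, ne_eq, not_true, not_false_iff, true_and, and_true, false_and, and_false, true_or, or_true, not_not, or_false, false_or]
    have eb0' : v ≠ b := fun hh => eb0 hh.symm
    by_cases g0 : G.Adj u b <;> by_cases g1 : G.Adj v b <;> simp only [localComp_adj, hneuv, hneuv', hpuv, hpuv', e0, e0', eb0, eb0', g0, g1, SimpleGraph.irrefl, ne_eq, not_true, not_false_iff, true_and, and_true, false_and, and_false, true_or, or_true, not_not, or_false, false_or]
  by_cases ea1 : a = v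
  · have eas : v = a := ea1.symm
    subst eas
    by_cases eb0 : b = u
    · have ebs : u = b := eb0.symm
      subst ebs
      simp only [localComp_adj, hneuv, hneuv', hpuv, hpuv', e0, e0', SimpleGraph.irrefl, ne_eq, not_true, not_false_iff, true_and, and_true, false_and, and_false, true_or, or_true, not_not, or_false, false_or]
    have eb0' : u ≠ b := fun hh => eb0 hh.symm
    by_cases g0 : G.Adj u b <;> by_cases g1 : G.Adj v b <;> simp only [localComp_adj, hneuv, hneuv', hpuv, hpuv', e0, e0', eb0, eb0', g0, g1, SimpleGraph.irrefl, ne_eq, not_true, not_false_iff, true_and, and_true, false_and, and_false, true_or, or_true, not_not, or_false, false_or]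
  have ea0' : u ≠ a := fun hh => ea0 hh.symm
  have ea1' : v ≠ a := fun hh => ea1 hh.symm
  by_cases eb0 : b = u
  · have ebs : u = b := eb0.symm
    subst ebs
    by_cases g0 : G.Adj u a <;> by_cases g1 : G.Adj v a <;> simp only [localComp_adj, hneuv, hneuv', hpuv, hpuv', e0, e0', ea0, ea0', ea1, ea1', g0, g1, SimpleGraph.irrefl, ne_eq, not_true, not_false_iff, true_and, and_true, false_and, and_false, true_or, or_true, not_not, or_false, false_or]
  by_cases eb1 : b = v
  · have ebs : v = b := eb1.symm
    subst ebs
    by_cases g0 : G.Adj u a <;> by_cases g1 : G.Adj v a <;> simp only [localComp_adj, hneuv, hneuv', hpuv, hpuv', e0, e0', ea0, ea0', ea1, ea1', g0, g1, SimpleGraph.irrefl, ne_eq, not_true, not_false_iff, true_and, and_true, false_and, and_false, true_or, or_true, not_not, or_false, false_or]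
  have eb0' : u ≠ b := fun hh => eb0 hh.symm
  have eb1' : v ≠ b := fun hh => eb1 hh.symm
  by_cases g0 : G.Adj u a <;> by_cases g1 : G.Adj u b <;> by_cases g2 : G.Adj v a <;> by_cases g3 : G.Adj v b <;> by_cases g4 : G.Adj a b <;> simp only [localComp_adj, hneuv, hneuv', hpuv, hpuv', e0, e0', ea0, ea0', ea1, ea1', eb0, eb0', eb1, eb1', g0, g1, g2, g3, g4, SimpleGraph.irrefl, ne_eq, not_true, not_false_iff, true_and, and_true, false_and, and_false, true_or, or_true, not_not, or_false, false_or]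

lemma lc_i3a (G : SimpleGraph V) (u v y : V) (hneuv : u ≠ v) (hneuy : u ≠ y) (hnevy : v ≠ y) (hpuv : ¬ G.Adj u v) (hpvy : ¬ G.Adj v y) (hpuy : G.Adj u y) :
    (localComp (localComp (localComp (localComp G v) u) y) u) = (localComp (localComp (localComp (localComp G u) y) u) v) := by
  have hneuv' : v ≠ u := fun hh => hneuv hh.symm
  have hneuy' : y ≠ u := fun hh => hneuy hh.symm
  have hnevy' : y ≠ v := fun hh => hnevy hh.symm
  have hpuv' : ¬ G.Adj v u := fun hh => hpuv hh.symm
  have hpvy' : ¬ G.Adj y v := fun hh => hpvy hh.symm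
  have hpuy' : G.Adj y u := hpuy.symm
  ext a b
  by_cases e0 : a = b
  · subst e0; simp only [SimpleGraph.irrefl]
  have e0' : b ≠ a := fun hh => e0 hh.symm
  by_cases ea0 : a = u
  · have eas : u = a := ea0.symm
    subst eas
    by_cases eb0 : b = v
    · have ebs : v = b := eb0.symm
      subst ebs
      simp only [localComp_adj, hneuv, hneuv', hneuy, hneuy', hnevy, hnevy', hpuv, hpuv', hpvy, hpvy', hpuy, hpuy', e0, e0', SimpleGraph.irrefl, ne_eq, not_true, not_false_iff, true_and, and_true, false_and, and_false, true_or, or_true, not_not, or_false, false_or]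
    by_cases eb1 : b = y
    · have ebs : y = b := eb1.symm
      subst ebs
      simp only [localComp_adj, hneuv, hneuv', hneuy, hneuy', hnevy, hnevy', hpuv, hpuv', hpvy, hpvy', hpuy, hpuy', e0, e0', SimpleGraph.irrefl, ne_eq, not_true, not_false_iff, true_and, and_true, false_and, and_false, true_or, or_true, not_not, or_false, false_or]
    have eb0' : v ≠ b := fun hh => eb0 hh.symm
    have eb1' : y ≠ b := fun hh => eb1 hh.symm
    by_cases g0 : G.Adj u b <;> by_cases g1 : G.Adj v b <;> by_cases g2 : G.Adj y b <;> simp only [localComp_adj, hneuv, hneuv', hneuy, hneuy', hnevy, hnevy', hpuv, hpuv', hpvy, hpvy', hpuy, hpuy', e0, e0', eb0, eb0', eb1, eb1', g0, g1, g2, SimpleGraph.irrefl, ne_eq, not_true, not_false_iff, true_and, and_true, false_and, and_false, true_or, or_true, not_not, or_false, false_or]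
  by_cases ea1 : a = v
  · have eas : v = a := ea1.symm
    subst eas
    by_cases eb0 : b = u
    · have ebs : u = b := eb0.symm
      subst ebs
      simp only [localComp_adj, hneuv, hneuv', hneuy, hneuy', hnevy, hnevy', hpuv, hpuv', hpvy, hpvy', hpuy, hpuy', e0, e0', SimpleGraph.irrefl, ne_eq, not_true, not_false_iff, true_and, and_true, false_and, and_false, true_or, or_true, not_not, or_false, false_or]
    by_cases eb1 : b = y
    · have ebs : y = b := eb1.symm
      subst ebs
      simp only [localComp_adj, hneuv, hneuv', hneuy, hneuy', hnevy, hnevy', hpuv, hpuv', hpvy, hpvy', hpuy, hpuy', e0, e0', SimpleGraph.irrefl, ne_eq, not_true, not_false_iff, true_and, and_true, false_and, and_false, true_or, or_true, not_not, or_false, false_or]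
    have eb0' : u ≠ b := fun hh => eb0 hh.symm
    have eb1' : y ≠ b := fun hh => eb1 hh.symm
    by_cases g0 : G.Adj u b <;> by_cases g1 : G.Adj v b <;> by_cases g2 : G.Adj y b <;> simp only [localComp_adj, hneuv, hneuv', hneuy, hneuy', hnevy, hnevy', hpuv, hpuv', hpvy, hpvy', hpuy, hpuy', e0, e0', eb0, eb0', eb1, eb1', g0, g1, g2, SimpleGraph.irrefl, ne_eq, not_true, not_false_iff, true_and, and_true, false_and, and_false, true_or, or_true, not_not, or_false, false_or]
  by_cases ea2 : a = y
  · have eas : y = a := ea2.symm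
    subst eas
    by_cases eb0 : b = u
    · have ebs : u = b := eb0.symm
      subst ebs
      simp only [localComp_adj, hneuv, hneuv', hneuy, hneuy', hnevy, hnevy', hpuv, hpuv', hpvy, hpvy', hpuy, hpuy', e0, e0', SimpleGraph.irrefl, ne_eq, not_true, not_false_iff, true_and, and_true, false_and, and_false, true_or, or_true, not_not, or_false, false_or]
    by_cases eb1 : b = v
    · have ebs : v = b := eb1.symm
      subst ebs
      simp only [localComp_adj, hneuv, hneuv', hneuy, hneuy', hnevy, hnevy', hpuv, hpuv', hpvy, hpvy', hpuy, hpuy', e0, e0', SimpleGraph.irrefl, ne_eq, not_true, not_false_iff, true_and, and_true, false_and, and_false, true_or, or_true, not_not, or_false, false_or]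
    have eb0' : u ≠ b := fun hh => eb0 hh.symm
    have eb1' : v ≠ b := fun hh => eb1 hh.symm
    by_cases g0 : G.Adj u b <;> by_cases g1 : G.Adj v b <;> by_cases g2 : G.Adj y b <;> simp only [localComp_adj, hneuv, hneuv', hneuy, hneuy', hnevy, hnevy', hpuv, hpuv', hpvy, hpvy', hpuy, hpuy', e0, e0', eb0, eb0', eb1, eb1', g0, g1, g2, SimpleGraph.irrefl, ne_eq, not_true, not_false_iff, true_and, and_true, false_and, and_false, true_or, or_true, not_not, or_false, false_or]
  have ea0' : u ≠ a := fun hh => ea0 hh.symm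
  have ea1' : v ≠ a := fun hh => ea1 hh.symm
  have ea2' : y ≠ a := fun hh => ea2 hh.symm
  by_cases eb0 : b = u
  · have ebs : u = b := eb0.symm
    subst ebs
    by_cases g0 : G.Adj u a <;> by_cases g1 : G.Adj v a <;> by_cases g2 : G.Adj y a <;> simp only [localComp_adj, hneuv, hneuv', hneuy, hneuy', hnevy, hnevy', hpuv, hpuv', hpvy, hpvy', hpuy, hpuy', e0, e0', ea0, ea0', ea1, ea1', ea2, ea2', g0, g1, g2, SimpleGraph.irrefl, ne_eq, not_true, not_false_iff, true_and, and_true, false_and, and_false, true_or, or_true, not_not, or_false, false_or]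
  by_cases eb1 : b = v
  · have ebs : v = b := eb1.symm
    subst ebs
    by_cases g0 : G.Adj u a <;> by_cases g1 : G.Adj v a <;> by_cases g2 : G.Adj y a <;> simp only [localComp_adj, hneuv, hneuv', hneuy, hneuy', hnevy, hnevy', hpuv, hpuv', hpvy, hpvy', hpuy, hpuy', e0, e0', ea0, ea0', ea1, ea1', ea2, ea2', g0, g1, g2, SimpleGraph.irrefl, ne_eq, not_true, not_false_iff, true_and, and_true, false_and, and_false, true_or, or_true, not_not, or_false, false_or]
  by_cases eb2 : b = y
  · have ebs : y = b := eb2.symm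
    subst ebs
    by_cases g0 : G.Adj u a <;> by_cases g1 : G.Adj v a <;> by_cases g2 : G.Adj y a <;> simp only [localComp_adj, hneuv, hneuv', hneuy, hneuy', hnevy, hnevy', hpuv, hpuv', hpvy, hpvy', hpuy, hpuy', e0, e0', ea0, ea0', ea1, ea1', ea2, ea2', g0, g1, g2, SimpleGraph.irrefl, ne_eq, not_true, not_false_iff, true_and, and_true, false_and, and_false, true_or, or_true, not_not, or_false, false_or]
  have eb0' : u ≠ b := fun hh => eb0 hh.symm
  have eb1' : v ≠ b := fun hh => eb1 hh.symm
  have eb2' : y ≠ b := fun hh => eb2 hh.symm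
  by_cases g0 : G.Adj u a <;> by_cases g1 : G.Adj u b <;> by_cases g2 : G.Adj v a <;> by_cases g3 : G.Adj v b <;> by_cases g4 : G.Adj y a <;> by_cases g5 : G.Adj y b <;> by_cases g6 : G.Adj a b <;> simp only [localComp_adj, hneuv, hneuv', hneuy, hneuy', hnevy, hnevy', hpuv, hpuv', hpvy, hpvy', hpuy, hpuy', e0, e0', ea0, ea0', ea1, ea1', ea2, ea2', eb0, eb0', eb1, eb1', eb2, eb2', g0, g1, g2, g3, g4, g5, g6, SimpleGraph.irrefl, ne_eq, not_true, not_false_iff, true_and, and_true, false_and, and_false, true_or, or_true, not_not, or_false, false_or]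

lemma lc_i3b (G : SimpleGraph V) (u v y : V) (hneuv : u ≠ v) (hneuy : u ≠ y) (hnevy : v ≠ y) (hpuv : ¬ G.Adj u v) (hpvy : G.Adj v y) (hpuy : G.Adj u y) :
    (localComp (localComp (localComp (localComp G v) u) y) u) = (localComp (localComp (localComp (localComp (localComp G u) y) u) v) y) := by
  have hneuv' : v ≠ u := fun hh => hneuv hh.symm
  have hneuy' : y ≠ u := fun hh => hneuy hh.symm
  have hnevy' : y ≠ v := fun hh => hnevy hh.symm
  have hpuv' : ¬ G.Adj v u := fun hh => hpuv hh.symm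
  have hpvy' : G.Adj y v := hpvy.symm
  have hpuy' : G.Adj y u := hpuy.symm
  ext a b
  by_cases e0 : a = b
  · subst e0; simp only [SimpleGraph.irrefl]
  have e0' : b ≠ a := fun hh => e0 hh.symm
  by_cases ea0 : a = u
  · have eas : u = a := ea0.symm
    subst eas
    by_cases eb0 : b = v
    · have ebs : v = b := eb0.symm
      subst ebs
      simp only [localComp_adj, hneuv, hneuv', hneuy, hneuy', hnevy, hnevy', hpuv, hpuv', hpvy, hpvy', hpuy, hpuy', e0, e0', SimpleGraph.irrefl, ne_eq, not_true, not_false_iff, true_and, and_true, false_and, and_false, true_or, or_true, not_not, or_false, false_or]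
    by_cases eb1 : b = y
    · have ebs : y = b := eb1.symm
      subst ebs
      simp only [localComp_adj, hneuv, hneuv', hneuy, hneuy', hnevy, hnevy', hpuv, hpuv', hpvy, hpvy', hpuy, hpuy', e0, e0', SimpleGraph.irrefl, ne_eq, not_true, not_false_iff, true_and, and_true, false_and, and_false, true_or, or_true, not_not, or_false, false_or]
    have eb0' : v ≠ b := fun hh => eb0 hh.symm
    have eb1' : y ≠ b := fun hh => eb1 hh.symm
    by_cases g0 : G.Adj u b <;> by_cases g1 : G.Adj v b <;> by_cases g2 : G.Adj y b <;> simp only [localComp_adj, hneuv, hneuv', hneuy, hneuy', hnevy, hnevy', hpuv, hpuv', hpvy, hpvy', hpuy, hpuy', e0, e0', eb0, eb0', eb1, eb1', g0, g1, g2, SimpleGraph.irrefl, ne_eq, not_true, not_false_iff, true_and, and_true, false_and, and_false, true_or, or_true, not_not, or_false, false_or]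
  by_cases ea1 : a = v
  · have eas : v = a := ea1.symm
    subst eas
    by_cases eb0 : b = u
    · have ebs : u = b := eb0.symm
      subst ebs
      simp only [localComp_adj, hneuv, hneuv', hneuy, hneuy', hnevy, hnevy', hpuv, hpuv', hpvy, hpvy', hpuy, hpuy', e0, e0', SimpleGraph.irrefl, ne_eq, not_true, not_false_iff, true_and, and_true, false_and, and_false, true_or, or_true, not_not, or_false, false_or]
    by_cases eb1 : b = y
    · have ebs : y = b := eb1.symm
      subst ebs
      simp only [localComp_adj, hneuv, hneuv', hneuy, hneuy', hnevy, hnevy', hpuv, hpuv', hpvy, hpvy', hpuy, hpuy', e0, e0', SimpleGraph.irrefl, ne_eq, not_true, not_false_iff, true_and, and_true, false_and, and_false, true_or, or_true, not_not, or_false, false_or]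
    have eb0' : u ≠ b := fun hh => eb0 hh.symm
    have eb1' : y ≠ b := fun hh => eb1 hh.symm
    by_cases g0 : G.Adj u b <;> by_cases g1 : G.Adj v b <;> by_cases g2 : G.Adj y b <;> simp only [localComp_adj, hneuv, hneuv', hneuy, hneuy', hnevy, hnevy', hpuv, hpuv', hpvy, hpvy', hpuy, hpuy', e0, e0', eb0, eb0', eb1, eb1', g0, g1, g2, SimpleGraph.irrefl, ne_eq, not_true, not_false_iff, true_and, and_true, false_and, and_false, true_or, or_true, not_not, or_false, false_or]
  by_cases ea2 : a = y
  · have eas : y = a := ea2.symm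
    subst eas
    by_cases eb0 : b = u
    · have ebs : u = b := eb0.symm
      subst ebs
      simp only [localComp_adj, hneuv, hneuv', hneuy, hneuy', hnevy, hnevy', hpuv, hpuv', hpvy, hpvy', hpuy, hpuy', e0, e0', SimpleGraph.irrefl, ne_eq, not_true, not_false_iff, true_and, and_true, false_and, and_false, true_or, or_true, not_not, or_false, false_or]
    by_cases eb1 : b = v
    · have ebs : v = b := eb1.symm
      subst ebs
      simp only [localComp_adj, hneuv, hneuv', hneuy, hneuy', hnevy, hnevy', hpuv, hpuv', hpvy, hpvy', hpuy, hpuy', e0, e0', SimpleGraph.irrefl, ne_eq, not_true, not_false_iff, true_and, and_true, false_and, and_false, true_or, or_true, not_not, or_false, false_or]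
    have eb0' : u ≠ b := fun hh => eb0 hh.symm
    have eb1' : v ≠ b := fun hh => eb1 hh.symm
    by_cases g0 : G.Adj u b <;> by_cases g1 : G.Adj v b <;> by_cases g2 : G.Adj y b <;> simp only [localComp_adj, hneuv, hneuv', hneuy, hneuy', hnevy, hnevy', hpuv, hpuv', hpvy, hpvy', hpuy, hpuy', e0, e0', eb0, eb0', eb1, eb1', g0, g1, g2, SimpleGraph.irrefl, ne_eq, not_true, not_false_iff, true_and, and_true, false_and, and_false, true_or, or_true, not_not, or_false, false_or]
  have ea0' : u ≠ a := fun hh => ea0 hh.symm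
  have ea1' : v ≠ a := fun hh => ea1 hh.symm
  have ea2' : y ≠ a := fun hh => ea2 hh.symm
  by_cases eb0 : b = u
  · have ebs : u = b := eb0.symm
    subst ebs
    by_cases g0 : G.Adj u a <;> by_cases g1 : G.Adj v a <;> by_cases g2 : G.Adj y a <;> simp only [localComp_adj, hneuv, hneuv', hneuy, hneuy', hnevy, hnevy', hpuv, hpuv', hpvy, hpvy', hpuy, hpuy', e0, e0', ea0, ea0', ea1, ea1', ea2, ea2', g0, g1, g2, SimpleGraph.irrefl, ne_eq, not_true, not_false_iff, true_and, and_true, false_and, and_false, true_or, or_true, not_not, or_false, false_or]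
  by_cases eb1 : b = v
  · have ebs : v = b := eb1.symm
    subst ebs
    by_cases g0 : G.Adj u a <;> by_cases g1 : G.Adj v a <;> by_cases g2 : G.Adj y a <;> simp only [localComp_adj, hneuv, hneuv', hneuy, hneuy', hnevy, hnevy', hpuv, hpuv', hpvy, hpvy', hpuy, hpuy', e0, e0', ea0, ea0', ea1, ea1', ea2, ea2', g0, g1, g2, SimpleGraph.irrefl, ne_eq, not_true, not_false_iff, true_and, and_true, false_and, and_false, true_or, or_true, not_not, or_false, false_or]
  by_cases eb2 : b = y
  · have ebs : y = b := eb2.symm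
    subst ebs
    by_cases g0 : G.Adj u a <;> by_cases g1 : G.Adj v a <;> by_cases g2 : G.Adj y a <;> simp only [localComp_adj, hneuv, hneuv', hneuy, hneuy', hnevy, hnevy', hpuv, hpuv', hpvy, hpvy', hpuy, hpuy', e0, e0', ea0, ea0', ea1, ea1', ea2, ea2', g0, g1, g2, SimpleGraph.irrefl, ne_eq, not_true, not_false_iff, true_and, and_true, false_and, and_false, true_or, or_true, not_not, or_false, false_or]
  have eb0' : u ≠ b := fun hh => eb0 hh.symm
  have eb1' : v ≠ b := fun hh => eb1 hh.symm
  have eb2' : y ≠ b := fun hh => eb2 hh.symm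
  by_cases g0 : G.Adj u a <;> by_cases g1 : G.Adj u b <;> by_cases g2 : G.Adj v a <;> by_cases g3 : G.Adj v b <;> by_cases g4 : G.Adj y a <;> by_cases g5 : G.Adj y b <;> by_cases g6 : G.Adj a b <;> simp only [localComp_adj, hneuv, hneuv', hneuy, hneuy', hnevy, hnevy', hpuv, hpuv', hpvy, hpvy', hpuy, hpuy', e0, e0', ea0, ea0', ea1, ea1', ea2, ea2', eb0, eb0', eb1, eb1', eb2, eb2', g0, g1, g2, g3, g4, g5, g6, SimpleGraph.irrefl, ne_eq, not_true, not_false_iff, true_and, and_true, false_and, and_false, true_or, or_true, not_not, or_false, false_or]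

lemma lc_i3c1 (G : SimpleGraph V) (u v y : V) (hneuv : u ≠ v) (hneuy : u ≠ y) (hnevy : v ≠ y) (hpuv : G.Adj u v) (hpvy : ¬ G.Adj v y) (hpuy : G.Adj u y) :
    (localComp (localComp (localComp (localComp G v) u) y) u) = (localComp (localComp (localComp G u) y) v) := by
  have hneuv' : v ≠ u := fun hh => hneuv hh.symm
  have hneuy' : y ≠ u := fun hh => hneuy hh.symm
  have hnevy' : y ≠ v := fun hh => hnevy hh.symm
  have hpuv' : G.Adj v u := hpuv.symm
  have hpvy' : ¬ G.Adj y v := fun hh => hpvy hh.symm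
  have hpuy' : G.Adj y u := hpuy.symm
  ext a b
  by_cases e0 : a = b
  · subst e0; simp only [SimpleGraph.irrefl]
  have e0' : b ≠ a := fun hh => e0 hh.symm
  by_cases ea0 : a = u
  · have eas : u = a := ea0.symm
    subst eas
    by_cases eb0 : b = v
    · have ebs : v = b := eb0.symm
      subst ebs
      simp only [localComp_adj, hneuv, hneuv', hneuy, hneuy', hnevy, hnevy', hpuv, hpuv', hpvy, hpvy', hpuy, hpuy', e0, e0', SimpleGraph.irrefl, ne_eq, not_true, not_false_iff, true_and, and_true, false_and, and_false, true_or, or_true, not_not, or_false, false_or]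
    by_cases eb1 : b = y
    · have ebs : y = b := eb1.symm
      subst ebs
      simp only [localComp_adj, hneuv, hneuv', hneuy, hneuy', hnevy, hnevy', hpuv, hpuv', hpvy, hpvy', hpuy, hpuy', e0, e0', SimpleGraph.irrefl, ne_eq, not_true, not_false_iff, true_and, and_true, false_and, and_false, true_or, or_true, not_not, or_false, false_or]
    have eb0' : v ≠ b := fun hh => eb0 hh.symm
    have eb1' : y ≠ b := fun hh => eb1 hh.symm
    by_cases g0 : G.Adj u b <;> by_cases g1 : G.Adj v b <;> by_cases g2 : G.Adj y b <;> simp only [localComp_adj, hneuv, hneuv', hneuy, hneuy', hnevy, hnevy', hpuv, hpuv', hpvy, hpvy', hpuy, hpuy', e0, e0', eb0, eb0', eb1, eb1', g0, g1, g2, SimpleGraph.irrefl, ne_eq, not_true, not_false_iff, true_and, and_true, false_and, and_false, true_or, or_true, not_not, or_false, false_or]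
  by_cases ea1 : a = v
  · have eas : v = a := ea1.symm
    subst eas
    by_cases eb0 : b = u
    · have ebs : u = b := eb0.symm
      subst ebs
      simp only [localComp_adj, hneuv, hneuv', hneuy, hneuy', hnevy, hnevy', hpuv, hpuv', hpvy, hpvy', hpuy, hpuy', e0, e0', SimpleGraph.irrefl, ne_eq, not_true, not_false_iff, true_and, and_true, false_and, and_false, true_or, or_true, not_not, or_false, false_or]
    by_cases eb1 : b = y
    · have ebs : y = b := eb1.symm
      subst ebs
      simp only [localComp_adj, hneuv, hneuv', hneuy, hneuy', hnevy, hnevy', hpuv, hpuv', hpvy, hpvy', hpuy, hpuy', e0, e0', SimpleGraph.irrefl, ne_eq, not_true, not_false_iff, true_and, and_true, false_and, and_false, true_or, or_true, not_not, or_false, false_or]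
    have eb0' : u ≠ b := fun hh => eb0 hh.symm
    have eb1' : y ≠ b := fun hh => eb1 hh.symm
    by_cases g0 : G.Adj u b <;> by_cases g1 : G.Adj v b <;> by_cases g2 : G.Adj y b <;> simp only [localComp_adj, hneuv, hneuv', hneuy, hneuy', hnevy, hnevy', hpuv, hpuv', hpvy, hpvy', hpuy, hpuy', e0, e0', eb0, eb0', eb1, eb1', g0, g1, g2, SimpleGraph.irrefl, ne_eq, not_true, not_false_iff, true_and, and_true, false_and, and_false, true_or, or_true, not_not, or_false, false_or]
  by_cases ea2 : a = y
  · have eas : y = a := ea2.symm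
    subst eas
    by_cases eb0 : b = u
    · have ebs : u = b := eb0.symm
      subst ebs
      simp only [localComp_adj, hneuv, hneuv', hneuy, hneuy', hnevy, hnevy', hpuv, hpuv', hpvy, hpvy', hpuy, hpuy', e0, e0', SimpleGraph.irrefl, ne_eq, not_true, not_false_iff, true_and, and_true, false_and, and_false, true_or, or_true, not_not, or_false, false_or]
    by_cases eb1 : b = v
    · have ebs : v = b := eb1.symm
      subst ebs
      simp only [localComp_adj, hneuv, hneuv', hneuy, hneuy', hnevy, hnevy', hpuv, hpuv', hpvy, hpvy', hpuy, hpuy', e0, e0', SimpleGraph.irrefl, ne_eq, not_true, not_false_iff, true_and, and_true, false_and, and_false, true_or, or_true, not_not, or_false, false_or]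
    have eb0' : u ≠ b := fun hh => eb0 hh.symm
    have eb1' : v ≠ b := fun hh => eb1 hh.symm
    by_cases g0 : G.Adj u b <;> by_cases g1 : G.Adj v b <;> by_cases g2 : G.Adj y b <;> simp only [localComp_adj, hneuv, hneuv', hneuy, hneuy', hnevy, hnevy', hpuv, hpuv', hpvy, hpvy', hpuy, hpuy', e0, e0', eb0, eb0', eb1, eb1', g0, g1, g2, SimpleGraph.irrefl, ne_eq, not_true, not_false_iff, true_and, and_true, false_and, and_false, true_or, or_true, not_not, or_false, false_or]
  have ea0' : u ≠ a := fun hh => ea0 hh.symm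
  have ea1' : v ≠ a := fun hh => ea1 hh.symm
  have ea2' : y ≠ a := fun hh => ea2 hh.symm
  by_cases eb0 : b = u
  · have ebs : u = b := eb0.symm
    subst ebs
    by_cases g0 : G.Adj u a <;> by_cases g1 : G.Adj v a <;> by_cases g2 : G.Adj y a <;> simp only [localComp_adj, hneuv, hneuv', hneuy, hneuy', hnevy, hnevy', hpuv, hpuv', hpvy, hpvy', hpuy, hpuy', e0, e0', ea0, ea0', ea1, ea1', ea2, ea2', g0, g1, g2, SimpleGraph.irrefl, ne_eq, not_true, not_false_iff, true_and, and_true, false_and, and_false, true_or, or_true, not_not, or_false, false_or]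
  by_cases eb1 : b = v
  · have ebs : v = b := eb1.symm
    subst ebs
    by_cases g0 : G.Adj u a <;> by_cases g1 : G.Adj v a <;> by_cases g2 : G.Adj y a <;> simp only [localComp_adj, hneuv, hneuv', hneuy, hneuy', hnevy, hnevy', hpuv, hpuv', hpvy, hpvy', hpuy, hpuy', e0, e0', ea0, ea0', ea1, ea1', ea2, ea2', g0, g1, g2, SimpleGraph.irrefl, ne_eq, not_true, not_false_iff, true_and, and_true, false_and, and_false, true_or, or_true, not_not, or_false, false_or]
  by_cases eb2 : b = y
  · have ebs : y = b := eb2.symm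
    subst ebs
    by_cases g0 : G.Adj u a <;> by_cases g1 : G.Adj v a <;> by_cases g2 : G.Adj y a <;> simp only [localComp_adj, hneuv, hneuv', hneuy, hneuy', hnevy, hnevy', hpuv, hpuv', hpvy, hpvy', hpuy, hpuy', e0, e0', ea0, ea0', ea1, ea1', ea2, ea2', g0, g1, g2, SimpleGraph.irrefl, ne_eq, not_true, not_false_iff, true_and, and_true, false_and, and_false, true_or, or_true, not_not, or_false, false_or]
  have eb0' : u ≠ b := fun hh => eb0 hh.symm
  have eb1' : v ≠ b := fun hh => eb1 hh.symm
  have eb2' : y ≠ b := fun hh => eb2 hh.symm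
  by_cases g0 : G.Adj u a <;> by_cases g1 : G.Adj u b <;> by_cases g2 : G.Adj v a <;> by_cases g3 : G.Adj v b <;> by_cases g4 : G.Adj y a <;> by_cases g5 : G.Adj y b <;> by_cases g6 : G.Adj a b <;> simp only [localComp_adj, hneuv, hneuv', hneuy, hneuy', hnevy, hnevy', hpuv, hpuv', hpvy, hpvy', hpuy, hpuy', e0, e0', ea0, ea0', ea1, ea1', ea2, ea2', eb0, eb0', eb1, eb1', eb2, eb2', g0, g1, g2, g3, g4, g5, g6, SimpleGraph.irrefl, ne_eq, not_true, not_false_iff, true_and, and_true, false_and, and_false, true_or, or_true, not_not, or_false, false_or]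

lemma lc_i3c2 (G : SimpleGraph V) (u v y : V) (hneuv : u ≠ v) (hneuy : u ≠ y) (hnevy : v ≠ y) (hpuv : G.Adj u v) (hpvy : G.Adj v y) (hpuy : ¬ G.Adj u y) :
    (localComp (localComp (localComp (localComp G v) u) y) u) = (localComp (localComp (localComp G u) y) v) := by
  have hneuv' : v ≠ u := fun hh => hneuv hh.symm
  have hneuy' : y ≠ u := fun hh => hneuy hh.symm
  have hnevy' : y ≠ v := fun hh => hnevy hh.symm
  have hpuv' : G.Adj v u := hpuv.symm
  have hpvy' : G.Adj y v := hpvy.symm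
  have hpuy' : ¬ G.Adj y u := fun hh => hpuy hh.symm
  ext a b
  by_cases e0 : a = b
  · subst e0; simp only [SimpleGraph.irrefl]
  have e0' : b ≠ a := fun hh => e0 hh.symm
  by_cases ea0 : a = u
  · have eas : u = a := ea0.symm
    subst eas
    by_cases eb0 : b = v
    · have ebs : v = b := eb0.symm
      subst ebs
      simp only [localComp_adj, hneuv, hneuv', hneuy, hneuy', hnevy, hnevy', hpuv, hpuv', hpvy, hpvy', hpuy, hpuy', e0, e0', SimpleGraph.irrefl, ne_eq, not_true, not_false_iff, true_and, and_true, false_and, and_false, true_or, or_true, not_not, or_false, false_or]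
    by_cases eb1 : b = y
    · have ebs : y = b := eb1.symm
      subst ebs
      simp only [localComp_adj, hneuv, hneuv', hneuy, hneuy', hnevy, hnevy', hpuv, hpuv', hpvy, hpvy', hpuy, hpuy', e0, e0', SimpleGraph.irrefl, ne_eq, not_true, not_false_iff, true_and, and_true, false_and, and_false, true_or, or_true, not_not, or_false, false_or]
    have eb0' : v ≠ b := fun hh => eb0 hh.symm
    have eb1' : y ≠ b := fun hh => eb1 hh.symm
    by_cases g0 : G.Adj u b <;> by_cases g1 : G.Adj v b <;> by_cases g2 : G.Adj y b <;> simp only [localComp_adj, hneuv, hneuv', hneuy, hneuy', hnevy, hnevy', hpuv, hpuv', hpvy, hpvy', hpuy, hpuy', e0, e0', eb0, eb0', eb1, eb1', g0, g1, g2, SimpleGraph.irrefl, ne_eq, not_true, not_false_iff, true_and, and_true, false_and, and_false, true_or, or_true, not_not, or_false, false_or]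
  by_cases ea1 : a = v
  · have eas : v = a := ea1.symm
    subst eas
    by_cases eb0 : b = u
    · have ebs : u = b := eb0.symm
      subst ebs
      simp only [localComp_adj, hneuv, hneuv', hneuy, hneuy', hnevy, hnevy', hpuv, hpuv', hpvy, hpvy', hpuy, hpuy', e0, e0', SimpleGraph.irrefl, ne_eq, not_true, not_false_iff, true_and, and_true, false_and, and_false, true_or, or_true, not_not, or_false, false_or]
    by_cases eb1 : b = y
    · have ebs : y = b := eb1.symm
      subst ebs
      simp only [localComp_adj, hneuv, hneuv', hneuy, hneuy', hnevy, hnevy', hpuv, hpuv', hpvy, hpvy', hpuy, hpuy', e0, e0', SimpleGraph.irrefl, ne_eq, not_true, not_false_iff, true_and, and_true, false_and, and_false, true_or, or_true, not_not, or_false, false_or]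
    have eb0' : u ≠ b := fun hh => eb0 hh.symm
    have eb1' : y ≠ b := fun hh => eb1 hh.symm
    by_cases g0 : G.Adj u b <;> by_cases g1 : G.Adj v b <;> by_cases g2 : G.Adj y b <;> simp only [localComp_adj, hneuv, hneuv', hneuy, hneuy', hnevy, hnevy', hpuv, hpuv', hpvy, hpvy', hpuy, hpuy', e0, e0', eb0, eb0', eb1, eb1', g0, g1, g2, SimpleGraph.irrefl, ne_eq, not_true, not_false_iff, true_and, and_true, false_and, and_false, true_or, or_true, not_not, or_false, false_or]
  by_cases ea2 : a = y
  · have eas : y = a := ea2.symm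
    subst eas
    by_cases eb0 : b = u
    · have ebs : u = b := eb0.symm
      subst ebs
      simp only [localComp_adj, hneuv, hneuv', hneuy, hneuy', hnevy, hnevy', hpuv, hpuv', hpvy, hpvy', hpuy, hpuy', e0, e0', SimpleGraph.irrefl, ne_eq, not_true, not_false_iff, true_and, and_true, false_and, and_false, true_or, or_true, not_not, or_false, false_or]
    by_cases eb1 : b = v
    · have ebs : v = b := eb1.symm
      subst ebs
      simp only [localComp_adj, hneuv, hneuv', hneuy, hneuy', hnevy, hnevy', hpuv, hpuv', hpvy, hpvy', hpuy, hpuy', e0, e0', SimpleGraph.irrefl, ne_eq, not_true, not_false_iff, true_and, and_true, false_and, and_false, true_or, or_true, not_not, or_false, false_or]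
    have eb0' : u ≠ b := fun hh => eb0 hh.symm
    have eb1' : v ≠ b := fun hh => eb1 hh.symm
    by_cases g0 : G.Adj u b <;> by_cases g1 : G.Adj v b <;> by_cases g2 : G.Adj y b <;> simp only [localComp_adj, hneuv, hneuv', hneuy, hneuy', hnevy, hnevy', hpuv, hpuv', hpvy, hpvy', hpuy, hpuy', e0, e0', eb0, eb0', eb1, eb1', g0, g1, g2, SimpleGraph.irrefl, ne_eq, not_true, not_false_iff, true_and, and_true, false_and, and_false, true_or, or_true, not_not, or_false, false_or]
  have ea0' : u ≠ a := fun hh => ea0 hh.symm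
  have ea1' : v ≠ a := fun hh => ea1 hh.symm
  have ea2' : y ≠ a := fun hh => ea2 hh.symm
  by_cases eb0 : b = u
  · have ebs : u = b := eb0.symm
    subst ebs
    by_cases g0 : G.Adj u a <;> by_cases g1 : G.Adj v a <;> by_cases g2 : G.Adj y a <;> simp only [localComp_adj, hneuv, hneuv', hneuy, hneuy', hnevy, hnevy', hpuv, hpuv', hpvy, hpvy', hpuy, hpuy', e0, e0', ea0, ea0', ea1, ea1', ea2, ea2', g0, g1, g2, SimpleGraph.irrefl, ne_eq, not_true, not_false_iff, true_and, and_true, false_and, and_false, true_or, or_true, not_not, or_false, false_or]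
  by_cases eb1 : b = v
  · have ebs : v = b := eb1.symm
    subst ebs
    by_cases g0 : G.Adj u a <;> by_cases g1 : G.Adj v a <;> by_cases g2 : G.Adj y a <;> simp only [localComp_adj, hneuv, hneuv', hneuy, hneuy', hnevy, hnevy', hpuv, hpuv', hpvy, hpvy', hpuy, hpuy', e0, e0', ea0, ea0', ea1, ea1', ea2, ea2', g0, g1, g2, SimpleGraph.irrefl, ne_eq, not_true, not_false_iff, true_and, and_true, false_and, and_false, true_or, or_true, not_not, or_false, false_or]
  by_cases eb2 : b = y
  · have ebs : y = b := eb2.symm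
    subst ebs
    by_cases g0 : G.Adj u a <;> by_cases g1 : G.Adj v a <;> by_cases g2 : G.Adj y a <;> simp only [localComp_adj, hneuv, hneuv', hneuy, hneuy', hnevy, hnevy', hpuv, hpuv', hpvy, hpvy', hpuy, hpuy', e0, e0', ea0, ea0', ea1, ea1', ea2, ea2', g0, g1, g2, SimpleGraph.irrefl, ne_eq, not_true, not_false_iff, true_and, and_true, false_and, and_false, true_or, or_true, not_not, or_false, false_or]
  have eb0' : u ≠ b := fun hh => eb0 hh.symm
  have eb1' : v ≠ b := fun hh => eb1 hh.symm
  have eb2' : y ≠ b := fun hh => eb2 hh.symm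
  by_cases g0 : G.Adj u a <;> by_cases g1 : G.Adj u b <;> by_cases g2 : G.Adj v a <;> by_cases g3 : G.Adj v b <;> by_cases g4 : G.Adj y a <;> by_cases g5 : G.Adj y b <;> by_cases g6 : G.Adj a b <;> simp only [localComp_adj, hneuv, hneuv', hneuy, hneuy', hnevy, hnevy', hpuv, hpuv', hpvy, hpvy', hpuy, hpuy', e0, e0', ea0, ea0', ea1, ea1', ea2, ea2', eb0, eb0', eb1, eb1', eb2, eb2', g0, g1, g2, g3, g4, g5, g6, SimpleGraph.irrefl, ne_eq, not_true, not_false_iff, true_and, and_true, false_and, and_false, true_or, or_true, not_not, or_false, false_or]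

lemma locEquiv_refl (G : SimpleGraph V) : LocEquiv G G := Relation.ReflTransGen.refl

lemma locEquiv_single (G : SimpleGraph V) (v : V) : LocEquiv G (localComp G v) :=
  Relation.ReflTransGen.single ⟨v, rfl⟩

lemma locEquiv_trans {G H K : SimpleGraph V} (h1 : LocEquiv G H) (h2 : LocEquiv H K) :
    LocEquiv G K := Relation.ReflTransGen.trans h1 h2

lemma locEquiv_symm {G H : SimpleGraph V} (h : LocEquiv G H) : LocEquiv H G := by
  have hs : Symmetric (fun A B : SimpleGraph V => ∃ v, B = localComp A v) := by
    rintro A B ⟨v, rfl⟩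
    exact ⟨v, (lc_invol A v).symm⟩
  exact (@Relation.ReflTransGen.symmetric _ _ ⟨fun a b hab => hs hab⟩).symm _ _ h

lemma comap_localComp {W U : Type} {f : W → U} (hf : Function.Injective f)
    (G : SimpleGraph U) (w : W) :
    (localComp G (f w)).comap f = localComp (G.comap f) w := by
  ext a b
  simp only [SimpleGraph.comap_adj, localComp_adj, hf.ne_iff]

lemma locEquiv_strip {W U : Type} {f : W → U} (hf : Function.Injective f)
    {X : SimpleGraph W} {Y : SimpleGraph U} {w : W}
    (h : LocEquiv X ((localComp Y (f w)).comap f)) : LocEquiv X (Y.comap f) := by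
  rw [comap_localComp hf] at h
  exact locEquiv_trans h (locEquiv_symm (locEquiv_single _ w))

lemma adj_localComp_left (G : SimpleGraph V) (u y : V) :
    (localComp G u).Adj u y ↔ G.Adj u y := by
  constructor
  · rintro ⟨hne, h | h⟩
    · exact absurd h.1 (G.irrefl)
    · exact h.2
  · intro h
    exact ⟨G.ne_of_adj h, Or.inr ⟨fun hc => G.irrefl hc.1, h⟩⟩

lemma adj_localComp_of_not_adj {G : SimpleGraph V} {v u : V} (hvu : ¬ G.Adj v u) (y : V) :
    (localComp G v).Adj u y ↔ G.Adj u y := by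
  constructor
  · rintro ⟨hne, h | h⟩
    · exact absurd h.1 hvu
    · exact h.2
  · intro h
    exact ⟨G.ne_of_adj h, Or.inr ⟨fun hc => hvu hc.1, h⟩⟩

section Bouchet

variable {W U : Type} {j : W → U} {u : U}

/-- The Bouchet trichotomy predicate. -/
def Opt (j : W → U) (u : U) (G H : SimpleGraph U) : Prop :=
  LocEquiv (H.comap j) (G.comap j) ∨
  LocEquiv (H.comap j) ((localComp G u).comap j) ∨
  ∃ y, G.Adj u y ∧
    LocEquiv (H.comap j) ((localComp (localComp (localComp G u) y) u).comap j)

theorem opt_of_locEquiv (hj : Function.Injective j) (hju : ∀ w, j w ≠ u)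
    (hcov : ∀ x : U, x = u ∨ ∃ w, j w = x)
    {G H : SimpleGraph U} (h : LocEquiv G H) : Opt j u G H := by
  induction h using Relation.ReflTransGen.head_induction_on with
  | refl => exact Or.inl (locEquiv_refl _)
  | head hstep _ ih =>
    rename_i A C _
    obtain ⟨v, rfl⟩ := hstep
    rcases ih with h1 | h2 | ⟨y, hy, h3⟩
    · -- H ~ (A*v)↓
      rcases hcov v with hveq | ⟨w, rfl⟩
      · subst v
        exact Or.inr (Or.inl h1)
      · exact Or.inl (locEquiv_strip hj h1)
    · -- H ~ (A*v*u)↓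
      rcases hcov v with hveq | ⟨w, rfl⟩
      · subst v
        rw [lc_invol] at h2
        exact Or.inl h2
      · by_cases hadj : A.Adj (j w) u
        · -- A*(jw)*u = (A*u*(jw)*u)*(jw)
          have hne : u ≠ j w := fun hh => (hju w) hh.symm
          have e : localComp (localComp (localComp (localComp A u) (j w)) u) (j w)
              = localComp (localComp A (j w)) u := by
            rw [lc_piv3 A u (j w) hne hadj.symm, lc_invol]
          rw [← e] at h2
          exact Or.inr (Or.inr ⟨j w, hadj.symm, locEquiv_strip hj h2⟩)
        · have hne : u ≠ j w := fun hh => (hju w) hh.symm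
          have e : localComp (localComp A (j w)) u = localComp (localComp A u) (j w) :=
            lc_comm A u (j w) hne (fun hh => hadj hh.symm)
          rw [e] at h2
          exact Or.inr (Or.inl (locEquiv_strip hj h2))
    · -- H ~ ((A*v)*u*y*u)↓ with (A*v).Adj u y
      rcases hcov v with hveq | ⟨w, rfl⟩
      · subst v
        have hy' : A.Adj u y := (adj_localComp_left A u y).mp hy
        have hne : u ≠ y := A.ne_of_adj hy'
        rw [lc_invol] at h3
        -- A*y*u = (A*u*y*u)*y
        have e : localComp (localComp (localComp (localComp A u) y) u) y
            = localComp (localComp A y) u := by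
          rw [lc_piv3 A u y hne hy', lc_invol]
        rw [← e] at h3
        rcases hcov y with rfl | ⟨wy, rfl⟩
        · exact absurd rfl hne
        · exact Or.inr (Or.inr ⟨j wy, hy', locEquiv_strip hj h3⟩)
      · -- v = j w
        have hvu : j w ≠ u := hju w
        by_cases hvy : j w = y
        · -- v = y
          subst hvy
          have hy' : A.Adj u (j w) :=
            ((adj_localComp_left A (j w) u).mp hy.symm).symm
          have hne : u ≠ j w := fun hh => hvu hh.symm
          -- A*(jw)*u*(jw)*u = A*u*(jw)
          have e : localComp (localComp (localComp (localComp A (j w)) u) (j w)) u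
              = localComp (localComp A u) (j w) := by
            rw [← lc_piv3 A u (j w) hne hy', lc_invol]
          rw [e] at h3
          exact Or.inr (Or.inl (locEquiv_strip hj h3))
        · -- v ∉ {u, y}
          have huy : u ≠ y := (localComp A (j w)).ne_of_adj hy
          have hyu : y ≠ u := fun hh => huy hh.symm
          rcases hcov y with rfl | ⟨wy, rfl⟩
          · exact absurd rfl hyu
          by_cases hadj : A.Adj (j w) u
          · -- I3c cases
            have hne_uv : u ≠ j w := fun hh => hvu hh.symm
            have hne_vy : j w ≠ j wy := hvy
            by_cases hvy2 : A.Adj (j w) (j wy)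
            · -- then ¬ A.Adj u y
              have huy2 : ¬ A.Adj u (j wy) := by
                rcases hy.2 with ⟨_, _, hne'⟩ | ⟨hc, _⟩
                · exact hne'
                · exact absurd ⟨hadj, hvy2⟩ hc
              have e := lc_i3c2 A u (j w) (j wy) hne_uv huy hne_vy hadj.symm hvy2
                (fun hh => huy2 hh)
              rw [e] at h3
              exact Or.inr (Or.inl (locEquiv_strip hj (locEquiv_strip hj h3)))
            · have huy2 : A.Adj u (j wy) := by
                rcases hy.2 with ⟨_, hc, _⟩ | ⟨_, h'⟩
                · exact absurd hc hvy2
                · exact h'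
              have e := lc_i3c1 A u (j w) (j wy) hne_uv huy hne_vy hadj.symm
                (fun hh => hvy2 hh) huy2
              rw [e] at h3
              exact Or.inr (Or.inl (locEquiv_strip hj (locEquiv_strip hj h3)))
          · -- ¬ A.Adj (j w) u : u-y adjacency unchanged
            have huy2 : A.Adj u (j wy) := (adj_localComp_of_not_adj hadj (j wy)).mp hy
            have hne_uv : u ≠ j w := fun hh => hvu hh.symm
            by_cases hvy2 : A.Adj (j w) (j wy)
            · have e := lc_i3b A u (j w) (j wy) hne_uv huy hvy
                (fun hh => hadj hh.symm) hvy2 huy2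
              rw [e] at h3
              exact Or.inr (Or.inr ⟨j wy, huy2,
                locEquiv_strip hj (locEquiv_strip hj h3)⟩)
            · have e := lc_i3a A u (j w) (j wy) hne_uv huy hvy
                (fun hh => hadj hh.symm) hvy2 huy2
              rw [e] at h3
              exact Or.inr (Or.inr ⟨j wy, huy2, locEquiv_strip hj h3⟩)

end Bouchet

section RankLemmas

variable {V : Type} [Fintype V]

lemma matRank_add_le (A B : Matrix V V (ZMod 2)) : (A + B).rank ≤ A.rank + B.rank := by
  classical
  rw [Matrix.rank, Matrix.rank, Matrix.rank, Matrix.mulVecLin_add]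
  have hr : LinearMap.range (A.mulVecLin + B.mulVecLin) ≤
      LinearMap.range A.mulVecLin ⊔ LinearMap.range B.mulVecLin := by
    rintro x ⟨v, rfl⟩
    exact Submodule.mem_sup.mpr ⟨A.mulVecLin v, ⟨v, rfl⟩, B.mulVecLin v, ⟨v, rfl⟩, rfl⟩
  exact le_trans (Submodule.finrank_mono hr)
    (Submodule.finrank_add_le_finrank_add_finrank _ _)

lemma matRank_outer_le_one (f g : V → ZMod 2) : (Matrix.vecMulVec f g).rank ≤ 1 := by
  rw [Matrix.vecMulVec_eq (Fin 1)]
  exact (Matrix.rank_mul_le_left _ _).trans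
    ((Matrix.rank_le_card_width _).trans (by simp))

lemma rankPert_mono {s t : ℕ} (h : s ≤ t) {G1 G2 : SimpleGraph V}
    (hp : IsRankPerturbation s G1 G2) : IsRankPerturbation t G1 G2 := by
  obtain ⟨M, hM, he⟩ := hp
  exact ⟨M, hM.trans h, he⟩

lemma rankPert_refl (n : ℕ) (G : SimpleGraph V) : IsRankPerturbation n G G := by
  refine ⟨0, ?_, fun x y _ => by simp⟩
  simp [Matrix.rank_zero]

lemma rankPert_trans {a b : ℕ} {G1 G2 G3 : SimpleGraph V}
    (h1 : IsRankPerturbation a G1 G2) (h2 : IsRankPerturbation b G2 G3) :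
    IsRankPerturbation (a + b) G1 G3 := by
  obtain ⟨M1, hM1, he1⟩ := h1
  obtain ⟨M2, hM2, he2⟩ := h2
  refine ⟨M1 + M2, le_trans (matRank_add_le _ _) (Nat.add_le_add hM1 hM2), fun x y hxy => ?_⟩
  have := he1 x y hxy
  have := he2 x y hxy
  simp only [Matrix.add_apply]
  rw [he1 x y hxy, he2 x y hxy]
  ring

end RankLemmas

section DiffLemmas

variable {V T : Type} [Fintype V]

lemma rankPert_localComp_inr (H : SimpleGraph (V ⊕ T)) (u : V ⊕ T) :
    IsRankPerturbation 1 ((localComp H u).comap Sum.inl) (H.comap Sum.inl) := by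
  classical
  set f : V → ZMod 2 := fun x => if H.Adj u (Sum.inl x) then 1 else 0 with hf
  refine ⟨Matrix.vecMulVec f f, matRank_outer_le_one f f, fun x y hxy => ?_⟩
  have hxy' : (Sum.inl x : V ⊕ T) ≠ Sum.inl y := fun hh => hxy (Sum.inl_injective hh)
  have hyx : y ≠ x := fun hh => hxy hh.symm
  have ac1 := H.adj_comm (Sum.inl x) u
  have ac2 := H.adj_comm (Sum.inl y) u
  have ac3 := H.adj_comm (Sum.inl y) (Sum.inl x)
  by_cases h1 : H.Adj u (Sum.inl x) <;> by_cases h2 : H.Adj u (Sum.inl y) <;>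
    by_cases h3 : H.Adj (Sum.inl x) (Sum.inl y) <;>
    simp [adjMat, localComp_adj, SimpleGraph.comap_adj, ac1, ac2, ac3, h1, h2, h3, hxy, hyx, hxy',
      Matrix.vecMulVec_apply, hf] <;> decide

lemma rankPert_pivot_inr (H : SimpleGraph (V ⊕ T)) (u w : V ⊕ T) (hadj : H.Adj u w)
    (hu : ∀ x : V, (Sum.inl x : V ⊕ T) ≠ u) :
    IsRankPerturbation 2
      ((localComp (localComp (localComp H u) w) u).comap Sum.inl) (H.comap Sum.inl) := by
  classical
  have hadj' : H.Adj w u := hadj.symm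
  have huw : u ≠ w := H.ne_of_adj hadj
  have huw' : w ≠ u := fun hh => huw hh.symm
  set f : V → ZMod 2 := fun x => if H.Adj u (Sum.inl x) then 1 else 0 with hfd
  set g : V → ZMod 2 :=
    fun x => (if H.Adj w (Sum.inl x) then 1 else 0) + (if (Sum.inl x : V ⊕ T) = w then 1 else 0)
    with hgd
  refine ⟨Matrix.vecMulVec f g + Matrix.vecMulVec g f,
    le_trans (matRank_add_le _ _)
      (Nat.add_le_add (matRank_outer_le_one f g) (matRank_outer_le_one g f)),
    fun x y hxy => ?_⟩
  have hxy' : (Sum.inl x : V ⊕ T) ≠ Sum.inl y := fun hh => hxy (Sum.inl_injective hh)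
  have hxy'' : (Sum.inl y : V ⊕ T) ≠ Sum.inl x := fun hh => hxy (Sum.inl_injective hh.symm)
  have hux : (Sum.inl x : V ⊕ T) ≠ u := hu x
  have hux' : u ≠ Sum.inl x := fun hh => hux hh.symm
  have huy : (Sum.inl y : V ⊕ T) ≠ u := hu y
  have huy' : u ≠ Sum.inl y := fun hh => huy hh.symm
  have hyx : y ≠ x := fun hh => hxy hh.symm
  have ac1 := H.adj_comm (Sum.inl x) u
  have ac2 := H.adj_comm (Sum.inl y) u
  have ac3 := H.adj_comm (Sum.inl y) (Sum.inl x)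
  have ac4 := H.adj_comm (Sum.inl x) w
  have ac5 := H.adj_comm (Sum.inl y) w
  have ac6 := H.adj_comm w u
  by_cases e1 : (Sum.inl x : V ⊕ T) = w
  · -- x sits on the pivot partner w (so w ∈ V-part)
    have e2 : (Sum.inl y : V ⊕ T) ≠ w := fun hh => hxy' (e1.trans hh.symm)
    have e2' : w ≠ Sum.inl y := fun hh => e2 hh.symm
    by_cases h2 : H.Adj u (Sum.inl y) <;> by_cases h4 : H.Adj w (Sum.inl y) <;>
      simp [adjMat, localComp_adj, SimpleGraph.comap_adj, Matrix.vecMulVec_apply, hfd, hgd,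
        e1, h2, h4, hadj, hadj', huw, huw', hxy, hyx, hxy', hxy'', hux, hux', huy, huy', e2, e2',
        ac1, ac2, ac3, ac4, ac5, ac6, SimpleGraph.irrefl] <;> decide
  · by_cases e2 : (Sum.inl y : V ⊕ T) = w
    · have e1' : w ≠ Sum.inl x := fun hh => e1 hh.symm
      by_cases h1 : H.Adj u (Sum.inl x) <;> by_cases h3 : H.Adj w (Sum.inl x) <;>
        simp [adjMat, localComp_adj, SimpleGraph.comap_adj, Matrix.vecMulVec_apply, hfd, hgd,
          e2, h1, h3, hadj, hadj', huw, huw', hxy, hyx, hxy', hxy'', hux, hux', huy, huy', e1, e1',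
          ac1, ac2, ac3, ac4, ac5, ac6, SimpleGraph.irrefl] <;> decide
    · have e1' : w ≠ Sum.inl x := fun hh => e1 hh.symm
      have e2' : w ≠ Sum.inl y := fun hh => e2 hh.symm
      by_cases h1 : H.Adj u (Sum.inl x) <;> by_cases h2 : H.Adj u (Sum.inl y) <;>
        by_cases h3 : H.Adj w (Sum.inl x) <;> by_cases h4 : H.Adj w (Sum.inl y) <;>
        by_cases h5 : H.Adj (Sum.inl x) (Sum.inl y) <;>
        simp [adjMat, localComp_adj, SimpleGraph.comap_adj, Matrix.vecMulVec_apply, hfd, hgd,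
          h1, h2, h3, h4, h5, hadj, hadj', huw, huw', hxy, hyx, hxy', hxy'', hux, hux', huy, huy',
          e1, e1', e2, e2', ac1, ac2, ac3, ac4, ac5, ac6, SimpleGraph.irrefl] <;> decide

end DiffLemmas

section Main

variable {V : Type} [Fintype V]

lemma locEquiv_comap_of_isEmpty {T : Type} [IsEmpty T] {G H : SimpleGraph (V ⊕ T)}
    (h : LocEquiv G H) : LocEquiv (G.comap Sum.inl) (H.comap Sum.inl) := by
  induction h with
  | refl => exact locEquiv_refl _
  | tail hGB hBC ih =>
    obtain ⟨x, rfl⟩ := hBC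
    cases x with
    | inl w =>
      refine locEquiv_trans ih ?_
      rw [show (Sum.inl w : V ⊕ T) = Sum.inl w from rfl, comap_localComp Sum.inl_injective]
      exact locEquiv_single _ w
    | inr t => exact isEmptyElim t

theorem main_perturb (n : ℕ) :
    ∀ (T : Type) [Fintype T], Fintype.card T = n →
      ∀ (H1 H2 : SimpleGraph (V ⊕ T)), LocEquiv H1 H2 →
        ∃ K : SimpleGraph V, LocEquiv (H1.comap Sum.inl) K ∧
          IsRankPerturbation (2 * n) K (H2.comap Sum.inl) := by
  induction n with
  | zero =>
    intro T _ hT H1 H2 h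
    haveI : IsEmpty T := Fintype.card_eq_zero_iff.mp hT
    exact ⟨H2.comap Sum.inl, locEquiv_comap_of_isEmpty h, rankPert_refl _ _⟩
  | succ n IH =>
    intro T instT hT H1 H2 h
    classical
    obtain ⟨u⟩ : Nonempty T := Fintype.card_pos_iff.mp (by omega)
    have hT' : Fintype.card {x : T // x ≠ u} = n := by
      have h1 : Fintype.card {x : T // ¬ x = u} = Fintype.card T - Fintype.card {x : T // x = u} :=
        Fintype.card_subtype_compl _
      rw [Fintype.card_subtype_eq] at h1
      simpa [hT] using h1
    set j : V ⊕ {x : T // x ≠ u} → V ⊕ T := Sum.map id Subtype.val with hjdef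
    have hj : Function.Injective j :=
      Function.Injective.sumMap Function.injective_id Subtype.val_injective
    have hju : ∀ w, j w ≠ Sum.inr u := by
      rintro (w | ⟨x, hx⟩) hh
      · simp [hjdef] at hh
      · simp only [hjdef, Sum.map_inr, Sum.inr.injEq] at hh
        exact hx hh
    have hcov : ∀ x : V ⊕ T, x = Sum.inr u ∨ ∃ w, j w = x := by
      rintro (v | t)
      · exact Or.inr ⟨Sum.inl v, rfl⟩
      · by_cases ht : t = u
        · exact Or.inl (by rw [ht])
        · exact Or.inr ⟨Sum.inr ⟨t, ht⟩, rfl⟩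
    have hopt := opt_of_locEquiv hj hju hcov (locEquiv_symm h)
    have harith : 2 * n + 2 = 2 * (n + 1) := by ring
    have hjinl : ∀ (M : SimpleGraph (V ⊕ T)), (M.comap j).comap Sum.inl = M.comap Sum.inl := by
      intro M
      ext x y
      rfl
    rcases hopt with h1 | h2 | ⟨y, hy, h3⟩
    · obtain ⟨K, hK1, hK2⟩ := IH {x : T // x ≠ u} hT' (H1.comap j) (H2.comap j) h1
      rw [hjinl] at hK1 hK2
      refine ⟨K, hK1, ?_⟩
      have := rankPert_trans hK2 (rankPert_refl 2 (H2.comap Sum.inl))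
      rwa [harith] at this
    · obtain ⟨K, hK1, hK2⟩ := IH {x : T // x ≠ u} hT'
        (H1.comap j) ((localComp H2 (Sum.inr u)).comap j) h2
      rw [hjinl] at hK1 hK2
      refine ⟨K, hK1, ?_⟩
      have := rankPert_trans hK2
        (rankPert_mono (s := 1) (t := 2) (by norm_num) (rankPert_localComp_inr H2 (Sum.inr u)))
      rwa [harith] at this
    · obtain ⟨K, hK1, hK2⟩ := IH {x : T // x ≠ u} hT'
        (H1.comap j)
        ((localComp (localComp (localComp H2 (Sum.inr u)) y) (Sum.inr u)).comap j) h3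
      rw [hjinl] at hK1 hK2
      refine ⟨K, hK1, ?_⟩
      have := rankPert_trans hK2
        (rankPert_pivot_inr H2 (Sum.inr u) y hy (fun x => by simp))
      rwa [harith] at this

end Main

/-- Every `t`-perturbation of a graph `G` is locally equivalent to a
rank-`2t` perturbation of `G`. -/
theorem perturbation_locEquiv_rankPerturbation {V : Type} [Fintype V] (t : ℕ)
    (G G' : SimpleGraph V) (h : IsPerturbation t G' G) :
    ∃ G'' : SimpleGraph V, LocEquiv G' G'' ∧ IsRankPerturbation (2 * t) G'' G := by
  obtain ⟨Gbig, ⟨K1, hK1, ha1⟩, ⟨K2, hK2, ha2⟩⟩ := h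
  have hG' : G' = K1.comap Sum.inl := by
    ext x y
    exact ha1 x y
  have hG : G = K2.comap Sum.inl := by
    ext x y
    exact ha2 x y
  have hle : LocEquiv K1 K2 := locEquiv_trans (locEquiv_symm hK1) hK2
  obtain ⟨K, h1, h2⟩ := main_perturb t (Fin t) (Fintype.card_fin t) K1 K2 hle
  exact ⟨K, by rw [hG']; exact h1, by rw [hG]; exact h2⟩

end EP
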